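/- Let f ∈ 𝔽_q[X,Y] be a nonzero polynomial all of whose monomials X^i Y^j satisfy i ≥ 0, j ≥ 0 and r·i + j ≤ q−2 (i.e. the support of f lies in the lattice points of □_0). If there are A pairwise distinct elements c₁, …, c_A ∈ 𝔽_q^* such that f(c_k, y) = 0 for all y ∈ 𝔽_q^* and all k, then A ≤ (q−2)/r. -/

import Mathlib

open Polynomial

/-- The "X-outer" interpretation of a bivariate polynomial:
variable `0` maps to the outer `X`, variable `1` maps to the inner variable. -/
noncomputable def toBivar {F : Type*} [Field F] :
    MvPolynomial (Fin 2) F →+* Polynomial (Polynomial F) :=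
  MvPolynomial.eval₂Hom (Polynomial.C.comp Polynomial.C)
    ![Polynomial.X, Polynomial.C Polynomial.X]

/-- The standard algebra equivalence `F[x,y] ≃ (F[y])[x]`. -/
noncomputable def bivarEquiv (F : Type*) [Field F] :
    MvPolynomial (Fin 2) F ≃ₐ[F] Polynomial (Polynomial F) :=
  (MvPolynomial.finSuccEquiv F 1).trans <|
    Polynomial.mapAlgEquiv <|
      (MvPolynomial.finSuccEquiv F 0).trans <|
        Polynomial.mapAlgEquiv (MvPolynomial.isEmptyAlgEquiv F (Fin 0))

lemma toBivar_eq_bivarEquiv {F : Type*} [Field F] :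
    (toBivar (F := F)) = (bivarEquiv F : MvPolynomial (Fin 2) F →+* Polynomial (Polynomial F)) := by
  apply MvPolynomial.ringHom_ext
  · intro a
    simp [toBivar, bivarEquiv, MvPolynomial.finSuccEquiv_apply]
    exact (MvPolynomial.coeff_zero_C (σ := Fin 0) a).symm
  · intro n
    fin_cases n
    · simp [toBivar, bivarEquiv, MvPolynomial.finSuccEquiv_X_zero]
    · have h1 : (MvPolynomial.X 1 : MvPolynomial (Fin 2) F) = MvPolynomial.X (Fin.succ 0) := rfl
      simp [toBivar, bivarEquiv, h1, MvPolynomial.finSuccEquiv_X_succ,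
        MvPolynomial.finSuccEquiv_X_zero]

lemma toBivar_injective {F : Type*} [Field F] :
    Function.Injective (toBivar (F := F)) := by
  rw [toBivar_eq_bivarEquiv]
  exact (bivarEquiv F).injective


lemma toBivar_X {F : Type*} [Field F] (n : Fin 2) :
    toBivar (MvPolynomial.X n : MvPolynomial (Fin 2) F) =
      ![Polynomial.X, Polynomial.C Polynomial.X] n :=
  MvPolynomial.eval₂Hom_X' _ _ _

lemma toBivar_X0 {F : Type*} [Field F] :
    toBivar (MvPolynomial.X 0 : MvPolynomial (Fin 2) F) = Polynomial.X := by
  simp [toBivar]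

lemma toBivar_X1 {F : Type*} [Field F] :
    toBivar (MvPolynomial.X 1 : MvPolynomial (Fin 2) F) = Polynomial.C Polynomial.X := by
  simp [toBivar]

lemma eval_eval_toBivar {F : Type*} [Field F] (f : MvPolynomial (Fin 2) F) (a b : F) :
    ((toBivar f).eval (Polynomial.C a)).eval b = MvPolynomial.eval ![a, b] f := by
  induction f using MvPolynomial.induction_on with
  | C c => simp [toBivar]
  | add p q hp hq => simp [map_add, hp, hq]
  | mul_X p n hp =>
      have key : eval b (eval (Polynomial.C a)
          ((![Polynomial.X, Polynomial.C Polynomial.X] : Fin 2 → Polynomial (Polynomial F)) n)) =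
            ![a, b] n := by
        fin_cases n <;> simp
      simp [map_mul, toBivar_X, hp, key]

lemma natDegree_toBivar_le {F : Type*} [Field F] (f : MvPolynomial (Fin 2) F) (D : ℕ)
    (h : ∀ m ∈ f.support, m 0 ≤ D) : (toBivar f).natDegree ≤ D := by
  rw [toBivar, MvPolynomial.coe_eval₂Hom, MvPolynomial.eval₂_eq']
  apply Polynomial.natDegree_sum_le_of_forall_le
  intro m hm
  calc (Polynomial.C (Polynomial.C (MvPolynomial.coeff m f)) *
          ∏ i, (![Polynomial.X, Polynomial.C Polynomial.X] : Fin 2 → Polynomial (Polynomial F)) i ^ m i).natDegree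
      ≤ _ + _ := Polynomial.natDegree_mul_le
    _ ≤ D := by
        rw [Fin.prod_univ_two]
        simp only [Matrix.cons_val_zero, Matrix.cons_val_one, Matrix.head_cons,
          Polynomial.natDegree_C, zero_add]
        calc (Polynomial.X ^ m 0 * Polynomial.C Polynomial.X ^ m 1).natDegree
            ≤ (Polynomial.X ^ m 0 : Polynomial (Polynomial F)).natDegree +
              (Polynomial.C Polynomial.X ^ m 1 : Polynomial (Polynomial F)).natDegree :=
              Polynomial.natDegree_mul_le
          _ ≤ m 0 + m 1 * (Polynomial.C Polynomial.X : Polynomial (Polynomial F)).natDegree := by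
              gcongr <;> [exact Polynomial.natDegree_X_pow_le _; exact Polynomial.natDegree_pow_le]
          _ ≤ D := by simp [Polynomial.natDegree_C, h m hm]

lemma eval_C_toBivar {F : Type*} [Field F] (f : MvPolynomial (Fin 2) F) (a : F) :
    (toBivar f).eval (Polynomial.C a) =
      MvPolynomial.eval₂ Polynomial.C ![Polynomial.C a, Polynomial.X] f := by
  induction f using MvPolynomial.induction_on with
  | C c => simp [toBivar]
  | add p q hp hq => simp [map_add, MvPolynomial.eval₂_add, hp, hq]
  | mul_X p n hp =>
      have key : eval (Polynomial.C a)
          ((![Polynomial.X, Polynomial.C Polynomial.X] : Fin 2 → Polynomial (Polynomial F)) n) =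
            (![Polynomial.C a, Polynomial.X] : Fin 2 → Polynomial F) n := by
        fin_cases n <;> simp
      simp [map_mul, toBivar_X, MvPolynomial.eval₂_mul, hp, key]

lemma natDegree_slice_le {F : Type*} [Field F] (f : MvPolynomial (Fin 2) F) (a : F) (D : ℕ)
    (h : ∀ m ∈ f.support, m 1 ≤ D) : ((toBivar f).eval (Polynomial.C a)).natDegree ≤ D := by
  rw [eval_C_toBivar, MvPolynomial.eval₂_eq']
  apply Polynomial.natDegree_sum_le_of_forall_le
  intro m hm
  calc (Polynomial.C (MvPolynomial.coeff m f) *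
          ∏ i, (![Polynomial.C a, Polynomial.X] : Fin 2 → Polynomial F) i ^ m i).natDegree
      ≤ _ + _ := Polynomial.natDegree_mul_le
    _ ≤ D := by
        rw [Fin.prod_univ_two]
        simp only [Matrix.cons_val_zero, Matrix.cons_val_one, Matrix.head_cons,
          Polynomial.natDegree_C, zero_add]
        calc (Polynomial.C a ^ m 0 * Polynomial.X ^ m 1).natDegree
            ≤ (Polynomial.C a ^ m 0 : Polynomial F).natDegree +
              (Polynomial.X ^ m 1 : Polynomial F).natDegree :=
              Polynomial.natDegree_mul_le
          _ ≤ m 0 * (Polynomial.C a : Polynomial F).natDegree + m 1 := by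
              gcongr <;> [exact Polynomial.natDegree_pow_le; exact Polynomial.natDegree_X_pow_le _]
          _ ≤ D := by simp [Polynomial.natDegree_C, h m hm]

/-- Let `q` be a prime power, `F = 𝔽_q`, and `r` a positive integer
dividing `q-2`.  Let `f ∈ 𝔽_q[X,Y]` be a nonzero polynomial all of whose monomials
`X^i Y^j` satisfy `i ≥ 0`, `j ≥ 0` and `r·i + j ≤ q-2` (the support of `f` lies in the
lattice points of `□_0`).  If there are `A` pairwise distinct elements
`c₁, …, c_A ∈ 𝔽_q^*` such that `f(c_k, y) = 0` for all `y ∈ 𝔽_q^*` and all `k`,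
then `A ≤ (q-2)/r`. -/
theorem card_vanishing_strata_le
    {F : Type*} [Field F] [Fintype F] (q : ℕ) (hq : q = Fintype.card F)
    (r : ℕ) (hr : 0 < r) (hdvd : r ∣ (q - 2))
    (f : MvPolynomial (Fin 2) F) (hf : f ≠ 0)
    (hsupp : ∀ m ∈ f.support, r * m 0 + m 1 ≤ q - 2)
    (A : ℕ) (c : Fin A → Fˣ) (hc : Function.Injective c)
    (hzero : ∀ k : Fin A, ∀ y : Fˣ,
      MvPolynomial.eval ![(c k : F), (y : F)] f = 0) :
    A ≤ (q - 2) / r := by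
  classical
  have hq2 : 2 ≤ q := by
    rw [hq]; exact Fintype.one_lt_card
  set g : Polynomial (Polynomial F) := toBivar f with hg_def
  have hg : g ≠ 0 := by
    intro h
    exact hf (toBivar_injective (by simpa [hg_def] using h))
  have hdegX : g.natDegree ≤ (q - 2) / r := by
    apply natDegree_toBivar_le
    intro m hm
    rw [Nat.le_div_iff_mul_le hr]
    calc m 0 * r = r * m 0 := Nat.mul_comm _ _
      _ ≤ r * m 0 + m 1 := Nat.le_add_right _ _
      _ ≤ q - 2 := hsupp m hm
  -- each slice polynomial vanishes
  have hslice : ∀ k : Fin A, g.eval (Polynomial.C ((c k : F))) = 0 := by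
    intro k
    by_contra hs
    set s := g.eval (Polynomial.C ((c k : F))) with hs_def
    have hdegs : s.natDegree ≤ q - 2 := by
      apply natDegree_slice_le
      intro m hm
      calc m 1 ≤ r * m 0 + m 1 := Nat.le_add_left _ _
        _ ≤ q - 2 := hsupp m hm
    have hroots : (Finset.univ.image (fun y : Fˣ => (y : F))).val ⊆ s.roots := by
      intro z hz
      simp only [Finset.mem_val, Finset.mem_image, Finset.mem_univ, true_and] at hz
      obtain ⟨y, rfl⟩ := hz
      rw [Polynomial.mem_roots hs]
      have := eval_eval_toBivar f (c k : F) (y : F)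
      rw [hzero k y] at this
      exact this
    have hcard : (Finset.univ.image (fun y : Fˣ => (y : F))).card = q - 1 := by
      rw [Finset.card_image_of_injective _ (fun a b h => Units.ext h), Finset.card_univ,
        Fintype.card_units, hq]
    have := Polynomial.card_le_degree_of_subset_roots hroots
    rw [hcard] at this
    omega
  -- the `c k` give distinct roots of `g`
  have hroots : (Finset.univ.image (fun k : Fin A => Polynomial.C ((c k : F)))).val ⊆ g.roots := by
    intro z hz
    simp only [Finset.mem_val, Finset.mem_image, Finset.mem_univ, true_and] at hz
    obtain ⟨k, rfl⟩ := hz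
    rw [Polynomial.mem_roots hg]
    exact hslice k
  have hcard : (Finset.univ.image (fun k : Fin A => Polynomial.C ((c k : F)))).card = A := by
    rw [Finset.card_image_of_injective _
        (fun a b h => hc (Units.ext (Polynomial.C_injective h))),
      Finset.card_univ, Fintype.card_fin]
  have := Polynomial.card_le_degree_of_subset_roots hroots
  rw [hcard] at this
  exact this.trans hdegX
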